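/- Let X be a fixed finite set and let P_N and Q_N, N >= 1, be two FOES model sequences on X^N satisfying condition PSR, with P_N S-unstable and LREP(P_N) > 0 for every N. Define the standardized log-likelihood L_N(x) = ( log P_N(x) - min_{y in X^N} log P_N(y) ) / LREP(P_N) for x in X^N. Then: (a) the P_N-expectation sum_{x in X^N} P_N(x) * L_N(x) converges to 1 as N tends to infinity, and for every delta > 0, P_N({ x : L_N(x) > 1 - delta }) converges to 1; (b) the Q_N-expectation sum_{x in X^N} Q_N(x) * (1 - L_N(x)) converges to 1 as N tends to infinity, and for every delta > 0, Q_N({ x : 1 - L_N(x) > 1 - delta }) converges to 1. (Theorem 3) -/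

import Mathlib

/-- The log-ratio of extremal probabilities of a positive function on a finite nonempty type. -/
noncomputable def LREP {S : Type*} [Fintype S] [Nonempty S] (P : S → ℝ) : ℝ :=
  Real.log (Finset.univ.sup' Finset.univ_nonempty P / Finset.univ.inf' Finset.univ_nonempty P)

/-- The standardized log-likelihood
`L(x) = (log P(x) - min_y log P(y)) / LREP(P)`. -/
noncomputable def stdLL {S : Type*} [Fintype S] [Nonempty S] (P : S → ℝ) (x : S) : ℝ :=
  (Real.log (P x) -
      Finset.univ.inf' Finset.univ_nonempty fun y => Real.log (P y)) / LREP P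

open Finset Filter

lemma inf'_pos {S : Type*} [Fintype S] [Nonempty S] {P : S → ℝ} (h : ∀ x, 0 < P x) :
    0 < Finset.univ.inf' Finset.univ_nonempty P := by
  obtain ⟨x, -, hx⟩ := Finset.exists_mem_eq_inf' Finset.univ_nonempty P
  rw [hx]; exact h x

lemma sup'_pos {S : Type*} [Fintype S] [Nonempty S] {P : S → ℝ} (h : ∀ x, 0 < P x) :
    0 < Finset.univ.sup' Finset.univ_nonempty P := by
  obtain ⟨x, -, hx⟩ := Finset.exists_mem_eq_sup' Finset.univ_nonempty P
  rw [hx]; exact h x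

lemma log_inf' {S : Type*} [Fintype S] [Nonempty S] {P : S → ℝ} (h : ∀ x, 0 < P x) :
    (Finset.univ.inf' Finset.univ_nonempty fun y => Real.log (P y))
      = Real.log (Finset.univ.inf' Finset.univ_nonempty P) := by
  obtain ⟨x, -, hx⟩ := Finset.exists_mem_eq_inf' Finset.univ_nonempty P
  rw [hx]
  apply le_antisymm
  · exact Finset.inf'_le _ (Finset.mem_univ x)
  · exact Finset.le_inf' _ _ fun y _ =>
      Real.log_le_log (h x) (hx ▸ Finset.inf'_le _ (Finset.mem_univ y))

lemma entropy_bound {S : Type*} [Fintype S] [Nonempty S] (R : S → ℝ)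
    (hpos : ∀ x, 0 < R x) (hsum : ∑ x, R x = 1) :
    ∑ x, R x * (Real.log (Finset.univ.sup' Finset.univ_nonempty R) - Real.log (R x))
      ≤ Real.log (Fintype.card S) := by
  set n : ℝ := (Fintype.card S : ℝ) with hn
  have hnpos : 0 < n := by
    have := Fintype.card_pos (α := S); positivity
  set M := Finset.univ.sup' Finset.univ_nonempty R with hMdef
  have hMpos : 0 < M := sup'_pos hpos
  have hM1 : M ≤ 1 := by
    obtain ⟨x, -, hx⟩ := Finset.exists_mem_eq_sup' Finset.univ_nonempty R
    rw [hMdef, hx, ← hsum]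
    exact Finset.single_le_sum (fun y _ => (hpos y).le) (Finset.mem_univ x)
  have key : ∀ x, R x * (Real.log M - Real.log (R x)) ≤ R x * Real.log n + (1/n - R x) := by
    intro x
    have h1 : Real.log M ≤ 0 := Real.log_nonpos hMpos.le hM1
    have h2 : Real.log (R x * n) = Real.log (R x) + Real.log n :=
      Real.log_mul (ne_of_gt (hpos x)) (ne_of_gt hnpos)
    have h3 : -Real.log (R x * n) ≤ 1/(R x * n) - 1 := by
      have h := Real.log_le_sub_one_of_pos (inv_pos.mpr (mul_pos (hpos x) hnpos))
      rw [Real.log_inv] at h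
      have : (R x * n)⁻¹ = 1/(R x * n) := by ring
      linarith [h, this ▸ h]
    have h4 : Real.log M - Real.log (R x) ≤ Real.log n + (1/(R x * n) - 1) := by
      have : Real.log M - Real.log (R x) = Real.log M + Real.log n - Real.log (R x * n) := by
        rw [h2]; ring
      linarith
    calc R x * (Real.log M - Real.log (R x))
        ≤ R x * (Real.log n + (1/(R x * n) - 1)) :=
          mul_le_mul_of_nonneg_left h4 (hpos x).le
      _ = R x * Real.log n + (1/n - R x) := by
          have hx0 : R x ≠ 0 := (hpos x).ne'
          have hn0 : n ≠ 0 := hnpos.ne'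
          field_simp
  calc ∑ x, R x * (Real.log M - Real.log (R x))
      ≤ ∑ x, (R x * Real.log n + (1/n - R x)) := Finset.sum_le_sum fun x _ => key x
    _ = Real.log n := by
        rw [Finset.sum_add_distrib, ← Finset.sum_mul, hsum, Finset.sum_sub_distrib, hsum,
          Finset.sum_const, Finset.card_univ]
        rw [nsmul_eq_mul, ← hn, mul_one_div_cancel hnpos.ne', sub_self, add_zero, one_mul]

lemma core {S : Type*} [Fintype S] [Nonempty S]
    (P Q : S → ℝ) (hP : ∀ x, 0 < P x) (hPs : ∑ x, P x = 1)
    (hQ : ∀ x, 0 < Q x) (hQs : ∑ x, Q x = 1)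
    (hPSR : ∀ x, P x * Q x = Finset.univ.sup' Finset.univ_nonempty P *
      Finset.univ.inf' Finset.univ_nonempty Q)
    (hL : 0 < LREP P) :
    (∀ x, 0 ≤ stdLL P x) ∧ (∀ x, stdLL P x ≤ 1) ∧
    (∑ x, P x * (1 - stdLL P x) ≤ Real.log (Fintype.card S) / LREP P) ∧
    (∑ x, Q x * stdLL P x ≤ Real.log (Fintype.card S) / LREP P) := by
  set M := Finset.univ.sup' Finset.univ_nonempty P with hMdef
  set m := Finset.univ.inf' Finset.univ_nonempty P with hmdef
  have hMpos : 0 < M := sup'_pos hP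
  have hmpos : 0 < m := inf'_pos hP
  have hLeq : LREP P = Real.log M - Real.log m := by
    rw [LREP, Real.log_div hMpos.ne' hmpos.ne']
  have hstd : ∀ x, stdLL P x = (Real.log (P x) - Real.log m) / LREP P := by
    intro x; rw [stdLL, log_inf' hP]
  have hlow : ∀ x, Real.log m ≤ Real.log (P x) := fun x =>
    Real.log_le_log hmpos (Finset.inf'_le _ (Finset.mem_univ x))
  have hhigh : ∀ x, Real.log (P x) ≤ Real.log M := fun x =>
    Real.log_le_log (hP x) (Finset.le_sup' _ (Finset.mem_univ x))
  have h0 : ∀ x, 0 ≤ stdLL P x := fun x => by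
    rw [hstd x]; exact div_nonneg (by linarith [hlow x]) hL.le
  have h1 : ∀ x, stdLL P x ≤ 1 := fun x => by
    rw [hstd x, div_le_one hL, hLeq]; linarith [hhigh x]
  refine ⟨h0, h1, ?_, ?_⟩
  · have hterm : ∀ x, P x * (1 - stdLL P x)
        = P x * ((Real.log M - Real.log (P x)) / LREP P) := by
      intro x
      rw [hstd x]
      have : 1 - (Real.log (P x) - Real.log m) / LREP P
          = (Real.log M - Real.log (P x)) / LREP P := by
        rw [eq_div_iff hL.ne', sub_mul, div_mul_cancel₀ _ hL.ne', hLeq]; ring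
      rw [this]
    calc ∑ x, P x * (1 - stdLL P x)
        = (∑ x, P x * (Real.log M - Real.log (P x))) / LREP P := by
          rw [Finset.sum_div]
          exact Finset.sum_congr rfl fun x _ => by rw [hterm x, mul_div_assoc]
      _ ≤ Real.log (Fintype.card S) / LREP P :=
          div_le_div_of_nonneg_right (entropy_bound P hP hPs) hL.le |>.trans_eq rfl
  · set MQ := Finset.univ.sup' Finset.univ_nonempty Q with hMQdef
    have hMQpos : 0 < MQ := sup'_pos hQ
    have hC : M * Finset.univ.inf' Finset.univ_nonempty Q ≤ m * MQ := by
      obtain ⟨x0, -, hx0⟩ := Finset.exists_mem_eq_inf' (Finset.univ_nonempty (α := S)) P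
      calc M * Finset.univ.inf' Finset.univ_nonempty Q = P x0 * Q x0 := (hPSR x0).symm
        _ = m * Q x0 := by rw [hmdef, hx0]
        _ ≤ m * MQ := mul_le_mul_of_nonneg_left (Finset.le_sup' _ (Finset.mem_univ x0)) hmpos.le
    have hpt : ∀ x, stdLL P x ≤ (Real.log MQ - Real.log (Q x)) / LREP P := by
      intro x
      rw [hstd x]
      apply div_le_div_of_nonneg_right ?_ hL.le
      have h5 : P x * Q x ≤ m * MQ := (hPSR x).le.trans hC
      have h6 : Real.log (P x) + Real.log (Q x) ≤ Real.log m + Real.log MQ := by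
        have := Real.log_le_log (mul_pos (hP x) (hQ x)) h5
        rwa [Real.log_mul (hP x).ne' (hQ x).ne', Real.log_mul hmpos.ne' hMQpos.ne'] at this
      linarith
    calc ∑ x, Q x * stdLL P x
        ≤ ∑ x, Q x * ((Real.log MQ - Real.log (Q x)) / LREP P) :=
          Finset.sum_le_sum fun x _ => mul_le_mul_of_nonneg_left (hpt x) (hQ x).le
      _ = (∑ x, Q x * (Real.log MQ - Real.log (Q x))) / LREP P := by
          rw [Finset.sum_div]
          exact Finset.sum_congr rfl fun x _ => (mul_div_assoc _ _ _).symm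
      _ ≤ Real.log (Fintype.card S) / LREP P :=
          div_le_div_of_nonneg_right (entropy_bound Q hQ hQs) hL.le

lemma exp_bounds {S : Type*} [Fintype S] (R L : S → ℝ)
    (hR : ∀ x, 0 ≤ R x) (hRs : ∑ x, R x = 1)
    (hL1 : ∀ x, L x ≤ 1) {ε : ℝ} (hε : ∑ x, R x * (1 - L x) ≤ ε) :
    1 - ε ≤ ∑ x, R x * L x ∧ ∑ x, R x * L x ≤ 1 := by
  constructor
  · have h : ∑ x, R x * (1 - L x) = 1 - ∑ x, R x * L x := by
      have h2 : ∑ x, R x * (1 - L x) = ∑ x, (R x - R x * L x) :=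
        Finset.sum_congr rfl fun x _ => by ring
      rw [h2, Finset.sum_sub_distrib, hRs]
    linarith
  · calc ∑ x, R x * L x ≤ ∑ x, R x :=
        Finset.sum_le_sum fun x _ => mul_le_of_le_one_right (hR x) (hL1 x)
      _ = 1 := hRs

lemma prob_bounds {S : Type*} [Fintype S] (R L : S → ℝ)
    (hR : ∀ x, 0 ≤ R x) (hRs : ∑ x, R x = 1)
    (hL1 : ∀ x, L x ≤ 1) {ε δ : ℝ} (hδ : 0 < δ)
    (hε : ∑ x, R x * (1 - L x) ≤ ε) [DecidablePred fun x => L x > 1 - δ] :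
    1 - ε / δ ≤ ∑ x ∈ Finset.univ.filter (fun x => L x > 1 - δ), R x ∧
      ∑ x ∈ Finset.univ.filter (fun x => L x > 1 - δ), R x ≤ 1 := by
  have hsplit := Finset.sum_filter_add_sum_filter_not Finset.univ (fun x => L x > 1 - δ) R
  rw [hRs] at hsplit
  have h1 : δ * ∑ x ∈ Finset.univ.filter (fun x => ¬ (L x > 1 - δ)), R x ≤ ε := by
    rw [Finset.mul_sum]
    calc ∑ x ∈ Finset.univ.filter (fun x => ¬ (L x > 1 - δ)), δ * R x
        ≤ ∑ x ∈ Finset.univ.filter (fun x => ¬ (L x > 1 - δ)), R x * (1 - L x) := by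
          apply Finset.sum_le_sum
          intro x hx
          simp only [Finset.mem_filter, not_lt] at hx
          have hd : δ ≤ 1 - L x := by linarith [hx.2]
          calc δ * R x = R x * δ := mul_comm _ _
            _ ≤ R x * (1 - L x) := mul_le_mul_of_nonneg_left hd (hR x)
      _ ≤ ∑ x, R x * (1 - L x) :=
          Finset.sum_le_sum_of_subset_of_nonneg (Finset.filter_subset _ _)
            (fun x _ _ => mul_nonneg (hR x) (by linarith [hL1 x]))
      _ ≤ ε := hε
  constructor
  · have h2 : ∑ x ∈ Finset.univ.filter (fun x => ¬ (L x > 1 - δ)), R x ≤ ε / δ :=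
      (le_div_iff₀' hδ).mpr h1
    linarith
  · calc ∑ x ∈ Finset.univ.filter (fun x => L x > 1 - δ), R x ≤ ∑ x, R x :=
        Finset.sum_le_sum_of_subset_of_nonneg (Finset.filter_subset _ _) (fun x _ _ => hR x)
      _ = 1 := hRs

open scoped Classical in
/-- Theorem 3: for an S-unstable FOES model sequence `P` with a companion sequence `Q`
satisfying condition PSR, the standardized log-likelihood converges to 1 in `P`-expectation
and in `P`-probability, while `1 - stdLL` converges to 1 in `Q`-expectation and in
`Q`-probability. -/
theorem theorem3 {X : Type*} [Fintype X] [Nonempty X]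
    (P Q : ∀ N : ℕ, (Fin N → X) → ℝ)
    (hPpos : ∀ N : ℕ, 1 ≤ N → ∀ x, 0 < P N x)
    (hPsum : ∀ N : ℕ, 1 ≤ N → ∑ x, P N x = 1)
    (hQpos : ∀ N : ℕ, 1 ≤ N → ∀ x, 0 < Q N x)
    (hQsum : ∀ N : ℕ, 1 ≤ N → ∑ x, Q N x = 1)
    (hPSR : ∀ N : ℕ, 1 ≤ N → ∀ x : Fin N → X,
      P N x * Q N x =
        Finset.univ.sup' Finset.univ_nonempty (P N) *
          Finset.univ.inf' Finset.univ_nonempty (Q N))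
    (hunstable : Filter.Tendsto (fun N : ℕ => LREP (P N) / (N : ℝ))
      Filter.atTop Filter.atTop)
    (hLREPpos : ∀ N : ℕ, 1 ≤ N → 0 < LREP (P N)) :
    ((Filter.Tendsto (fun N : ℕ => ∑ x, P N x * stdLL (P N) x)
        Filter.atTop (nhds 1) ∧
      ∀ δ : ℝ, 0 < δ →
        Filter.Tendsto
          (fun N : ℕ => ∑ x ∈ Finset.univ.filter (fun x => stdLL (P N) x > 1 - δ), P N x)
          Filter.atTop (nhds 1)) ∧
     (Filter.Tendsto (fun N : ℕ => ∑ x, Q N x * (1 - stdLL (P N) x))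
        Filter.atTop (nhds 1) ∧
      ∀ δ : ℝ, 0 < δ →
        Filter.Tendsto
          (fun N : ℕ => ∑ x ∈ Finset.univ.filter (fun x => 1 - stdLL (P N) x > 1 - δ), Q N x)
          Filter.atTop (nhds 1))) := by
  set c : ℝ := Real.log (Fintype.card X) with hc
  set b : ℕ → ℝ := fun N => (N : ℝ) / LREP (P N) * c with hbdef
  have hb : Tendsto b atTop (nhds 0) := by
    have h1 : Tendsto (fun N : ℕ => (LREP (P N) / (N : ℝ))⁻¹) atTop (nhds 0) :=
      hunstable.inv_tendsto_atTop
    have h2 : Tendsto (fun N : ℕ => (N : ℝ) / LREP (P N)) atTop (nhds 0) := by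
      simpa [inv_div] using h1
    simpa using h2.mul_const c
  have hcore : ∀ N : ℕ, 1 ≤ N →
      (∀ x, 0 ≤ stdLL (P N) x) ∧ (∀ x, stdLL (P N) x ≤ 1) ∧
      (∑ x, P N x * (1 - stdLL (P N) x) ≤ Real.log (Fintype.card (Fin N → X)) / LREP (P N)) ∧
      (∑ x, Q N x * stdLL (P N) x ≤ Real.log (Fintype.card (Fin N → X)) / LREP (P N)) :=
    fun N hN => core (P N) (Q N) (hPpos N hN) (hPsum N hN) (hQpos N hN) (hQsum N hN)
      (hPSR N hN) (hLREPpos N hN)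
  have hcard : ∀ N : ℕ, Real.log (Fintype.card (Fin N → X)) / LREP (P N) = b N := by
    intro N
    have h1 : (Fintype.card (Fin N → X) : ℝ) = ((Fintype.card X : ℝ)) ^ N := by
      rw [Fintype.card_fun, Fintype.card_fin]; push_cast; ring
    rw [hbdef, hc, h1, Real.log_pow]
    push_cast
    ring
  have hA : ∀ N : ℕ, 1 ≤ N → ∑ x, P N x * (1 - stdLL (P N) x) ≤ b N := fun N hN =>
    (hcard N) ▸ (hcore N hN).2.2.1
  have hB : ∀ N : ℕ, 1 ≤ N → ∑ x, Q N x * stdLL (P N) x ≤ b N := fun N hN =>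
    (hcard N) ▸ (hcore N hN).2.2.2
  have hone : Tendsto (fun N : ℕ => 1 - b N) atTop (nhds 1) := by
    simpa using tendsto_const_nhds.sub hb
  refine ⟨⟨?_, ?_⟩, ?_, ?_⟩
  · refine tendsto_of_tendsto_of_tendsto_of_le_of_le' hone tendsto_const_nhds ?_ ?_
    · filter_upwards [eventually_ge_atTop 1] with N hN
      exact (exp_bounds (P N) (stdLL (P N)) (fun x => (hPpos N hN x).le) (hPsum N hN)
        (hcore N hN).2.1 (hA N hN)).1
    · filter_upwards [eventually_ge_atTop 1] with N hN
      exact (exp_bounds (P N) (stdLL (P N)) (fun x => (hPpos N hN x).le) (hPsum N hN)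
        (hcore N hN).2.1 (hA N hN)).2
  · intro δ hδ
    have hone' : Tendsto (fun N : ℕ => 1 - b N / δ) atTop (nhds 1) := by
      simpa using tendsto_const_nhds.sub (hb.div_const δ)
    refine tendsto_of_tendsto_of_tendsto_of_le_of_le' hone' tendsto_const_nhds ?_ ?_
    · filter_upwards [eventually_ge_atTop 1] with N hN
      exact (prob_bounds (P N) (stdLL (P N)) (fun x => (hPpos N hN x).le) (hPsum N hN)
        (hcore N hN).2.1 hδ (hA N hN)).1
    · filter_upwards [eventually_ge_atTop 1] with N hN
      exact (prob_bounds (P N) (stdLL (P N)) (fun x => (hPpos N hN x).le) (hPsum N hN)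
        (hcore N hN).2.1 hδ (hA N hN)).2
  · have hB' : ∀ N : ℕ, 1 ≤ N →
        ∑ x, Q N x * (1 - (fun x => 1 - stdLL (P N) x) x) ≤ b N := by
      intro N hN
      have heq : ∑ x, Q N x * (1 - (1 - stdLL (P N) x)) = ∑ x, Q N x * stdLL (P N) x :=
        Finset.sum_congr rfl fun x _ => by ring
      rw [heq]; exact hB N hN
    refine tendsto_of_tendsto_of_tendsto_of_le_of_le' hone tendsto_const_nhds ?_ ?_
    · filter_upwards [eventually_ge_atTop 1] with N hN
      exact (exp_bounds (Q N) (fun x => 1 - stdLL (P N) x) (fun x => (hQpos N hN x).le)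
        (hQsum N hN) (fun x => by show 1 - stdLL (P N) x ≤ 1; linarith [(hcore N hN).1 x]) (hB' N hN)).1
    · filter_upwards [eventually_ge_atTop 1] with N hN
      exact (exp_bounds (Q N) (fun x => 1 - stdLL (P N) x) (fun x => (hQpos N hN x).le)
        (hQsum N hN) (fun x => by show 1 - stdLL (P N) x ≤ 1; linarith [(hcore N hN).1 x]) (hB' N hN)).2
  · intro δ hδ
    have hB' : ∀ N : ℕ, 1 ≤ N →
        ∑ x, Q N x * (1 - (fun x => 1 - stdLL (P N) x) x) ≤ b N := by
      intro N hN
      have heq : ∑ x, Q N x * (1 - (1 - stdLL (P N) x)) = ∑ x, Q N x * stdLL (P N) x :=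
        Finset.sum_congr rfl fun x _ => by ring
      rw [heq]; exact hB N hN
    have hone' : Tendsto (fun N : ℕ => 1 - b N / δ) atTop (nhds 1) := by
      simpa using tendsto_const_nhds.sub (hb.div_const δ)
    refine tendsto_of_tendsto_of_tendsto_of_le_of_le' hone' tendsto_const_nhds ?_ ?_
    · filter_upwards [eventually_ge_atTop 1] with N hN
      exact (prob_bounds (Q N) (fun x => 1 - stdLL (P N) x) (fun x => (hQpos N hN x).le)
        (hQsum N hN) (fun x => by show 1 - stdLL (P N) x ≤ 1; linarith [(hcore N hN).1 x]) hδ (hB' N hN)).1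
    · filter_upwards [eventually_ge_atTop 1] with N hN
      exact (prob_bounds (Q N) (fun x => 1 - stdLL (P N) x) (fun x => (hQpos N hN x).le)
        (hQsum N hN) (fun x => by show 1 - stdLL (P N) x ≤ 1; linarith [(hcore N hN).1 x]) hδ (hB' N hN)).2
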